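/- Let a > −4, b > 0, and Γ₀, Υ₀ be C¹ with Γ₀(y_⋆) > 0, Υ₀(y_⋆) > 0 where y_⋆ = (a+4)/(a+6), v_⋆ = 2Υ₀(y_⋆)/(a+6), and assume (bΥ₀(y_⋆) − y_⋆ Υ₀'(y_⋆))(1−y_⋆) + y_⋆Υ₀(y_⋆) > 0. Then (y_⋆, v_⋆) is a fixed point of the planar system dy/dξ = (Υ₀(y)(1−y) − v)y, dv/dξ = (b(Υ₀(y)(1−y) − v) + Γ₀(y)(2 − (6+a)(1−y)))v, its Jacobian has determinant 2 y_⋆ Γ₀(y_⋆) Υ₀(y_⋆) > 0 and trace −((bΥ₀(y_⋆) − y_⋆Υ₀'(y_⋆))(1−y_⋆) + y_⋆Υ₀(y_⋆)) < 0; hence it is a hyperbolic sink (both eigenvalues have negative real part). -/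

import Mathlib

open Matrix

/-- First component of the planar vector field. -/
noncomputable def planarF1 (Υ₀ : ℝ → ℝ) (y v : ℝ) : ℝ :=
  (Υ₀ y * (1 - y) - v) * y

/-- Second component of the planar vector field. -/
noncomputable def planarF2 (Υ₀ Γ₀ : ℝ → ℝ) (a b : ℝ) (y v : ℝ) : ℝ :=
  (b * (Υ₀ y * (1 - y) - v) + Γ₀ y * (2 - (6 + a) * (1 - y))) * v

lemma quad_root_re_neg (T D : ℝ) (hT : T < 0) (hD : 0 < D) (z : ℂ)
    (hz : z ^ 2 - (T : ℂ) * z + (D : ℂ) = 0) : z.re < 0 := by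
  have h := hz
  rw [Complex.ext_iff] at h
  simp [pow_two, Complex.add_re, Complex.add_im, Complex.sub_re, Complex.sub_im,
    Complex.mul_re, Complex.mul_im, Complex.ofReal_re, Complex.ofReal_im] at h
  obtain ⟨h1, h2⟩ := h
  by_contra hx
  push_neg at hx
  have hy2 : z.im * z.im * (2 * z.re - T) = 0 := by nlinarith [h2]
  have hpos : 0 < 2 * z.re - T := by linarith
  have : z.im * z.im = 0 := by
    rcases mul_eq_zero.mp hy2 with h | h
    · exact h
    · linarith
  nlinarith [this, h1, sq_nonneg z.re]

/-- The interior fixed point P = (y⋆, v⋆) is a hyperbolic sink. -/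
theorem interior_fixed_point_is_sink
    (Υ₀ Γ₀ : ℝ → ℝ) (a b : ℝ) (ha : -4 < a) (hb : 0 < b)
    (hΥ : ContDiff ℝ 1 Υ₀) (hΓ : ContDiff ℝ 1 Γ₀)
    (ystar vstar : ℝ) (hy : ystar = (a + 4) / (a + 6))
    (hv : vstar = 2 * Υ₀ ystar / (a + 6))
    (hΓpos : 0 < Γ₀ ystar) (hΥpos : 0 < Υ₀ ystar)
    (hdulac : 0 < (b * Υ₀ ystar - ystar * deriv Υ₀ ystar) * (1 - ystar)
        + ystar * Υ₀ ystar) :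
    planarF1 Υ₀ ystar vstar = 0 ∧
    planarF2 Υ₀ Γ₀ a b ystar vstar = 0 ∧
    ∀ J : Matrix (Fin 2) (Fin 2) ℝ,
      J = !![deriv (fun t => planarF1 Υ₀ t vstar) ystar,
             deriv (fun w => planarF1 Υ₀ ystar w) vstar;
             deriv (fun t => planarF2 Υ₀ Γ₀ a b t vstar) ystar,
             deriv (fun w => planarF2 Υ₀ Γ₀ a b ystar w) vstar] →
      J.det = 2 * ystar * Γ₀ ystar * Υ₀ ystar ∧ 0 < J.det ∧
      J.trace = -((b * Υ₀ ystar - ystar * deriv Υ₀ ystar) * (1 - ystar)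
          + ystar * Υ₀ ystar) ∧ J.trace < 0 ∧
      ∀ z : ℂ, z ^ 2 - (J.trace : ℂ) * z + (J.det : ℂ) = 0 → z.re < 0 := by
  have h6 : (0:ℝ) < a + 6 := by linarith
  have h1y : (a + 6) * (1 - ystar) = 2 := by rw [hy]; field_simp; ring
  have hypos : 0 < ystar := by rw [hy]; apply div_pos <;> linarith
  have hE : Υ₀ ystar * (1 - ystar) - vstar = 0 := by
    rw [hv]
    have : (1 - ystar) = 2 / (a + 6) := by field_simp; linarith [h1y]
    rw [this]; field_simp; ring
  have hC : 2 - (6 + a) * (1 - ystar) = 0 := by linarith [h1y]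
  have hv' : vstar = Υ₀ ystar * (1 - ystar) := by linarith [hE]
  -- derivatives
  have hΥd : HasDerivAt Υ₀ (deriv Υ₀ ystar) ystar :=
    ((hΥ.differentiable one_ne_zero) ystar).hasDerivAt
  have hΓd : HasDerivAt Γ₀ (deriv Γ₀ ystar) ystar :=
    ((hΓ.differentiable one_ne_zero) ystar).hasDerivAt
  have hone : HasDerivAt (fun t : ℝ => 1 - t) (-1) ystar := by
    simpa using (hasDerivAt_id ystar).const_sub 1
  have hf1y : HasDerivAt (fun t => (Υ₀ t * (1 - t) - vstar) * t)
      ((deriv Υ₀ ystar * (1 - ystar) + Υ₀ ystar * (-1)) * ystar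
        + (Υ₀ ystar * (1 - ystar) - vstar) * 1) ystar :=
    ((hΥd.mul hone).sub_const vstar).mul (hasDerivAt_id ystar)
  have hf1v : HasDerivAt (fun w => (Υ₀ ystar * (1 - ystar) - w) * ystar)
      (-1 * ystar) vstar :=
    (((hasDerivAt_id vstar).const_sub _)).mul_const ystar
  have hin : HasDerivAt (fun t : ℝ => 2 - (6 + a) * (1 - t)) (-((6 + a) * (-1))) ystar :=
    (hone.const_mul (6 + a)).const_sub 2
  have hf2y : HasDerivAt
      (fun t => (b * (Υ₀ t * (1 - t) - vstar) + Γ₀ t * (2 - (6 + a) * (1 - t))) * vstar)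
      ((b * (deriv Υ₀ ystar * (1 - ystar) + Υ₀ ystar * (-1))
        + (deriv Γ₀ ystar * (2 - (6 + a) * (1 - ystar))
          + Γ₀ ystar * (-((6 + a) * (-1))))) * vstar) ystar :=
    ((((hΥd.mul hone).sub_const vstar).const_mul b).add (hΓd.mul hin)).mul_const vstar
  have hf2v : HasDerivAt
      (fun w => (b * (Υ₀ ystar * (1 - ystar) - w)
        + Γ₀ ystar * (2 - (6 + a) * (1 - ystar))) * w)
      (b * -1 * vstar + (b * (Υ₀ ystar * (1 - ystar) - vstar)
        + Γ₀ ystar * (2 - (6 + a) * (1 - ystar))) * 1) vstar := by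
    simpa [Pi.mul_def] using
      ((((hasDerivAt_id vstar).const_sub _).const_mul b).add_const _).mul (hasDerivAt_id vstar)
  have e11 : deriv (fun t => planarF1 Υ₀ t vstar) ystar
      = (deriv Υ₀ ystar * (1 - ystar) + Υ₀ ystar * (-1)) * ystar
        + (Υ₀ ystar * (1 - ystar) - vstar) * 1 := by
    simp only [planarF1]; exact hf1y.deriv
  have e12 : deriv (fun w => planarF1 Υ₀ ystar w) vstar = -1 * ystar := by
    simp only [planarF1]; exact hf1v.deriv
  have e21 : deriv (fun t => planarF2 Υ₀ Γ₀ a b t vstar) ystar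
      = (b * (deriv Υ₀ ystar * (1 - ystar) + Υ₀ ystar * (-1))
        + (deriv Γ₀ ystar * (2 - (6 + a) * (1 - ystar))
          + Γ₀ ystar * (-((6 + a) * (-1))))) * vstar := by
    simp only [planarF2]; exact hf2y.deriv
  have e22 : deriv (fun w => planarF2 Υ₀ Γ₀ a b ystar w) vstar
      = b * -1 * vstar + (b * (Υ₀ ystar * (1 - ystar) - vstar)
        + Γ₀ ystar * (2 - (6 + a) * (1 - ystar))) * 1 := by
    simp only [planarF2]; exact hf2v.deriv
  refine ⟨by simp [planarF1, hE], by simp [planarF2, hE, hC], ?_⟩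
  intro J hJ
  have hdet : J.det = 2 * ystar * Γ₀ ystar * Υ₀ ystar := by
    rw [hJ, Matrix.det_fin_two_of, e11, e12, e21, e22, hE, hC, hv']
    linear_combination (ystar * Υ₀ ystar * Γ₀ ystar) * h1y
  have htr : J.trace = -((b * Υ₀ ystar - ystar * deriv Υ₀ ystar) * (1 - ystar)
      + ystar * Υ₀ ystar) := by
    rw [hJ]
    rw [Matrix.trace_fin_two_of, e11, e22, hE, hC, hv']
    ring
  have hdetpos : 0 < J.det := by rw [hdet]; positivity
  have htrneg : J.trace < 0 := by rw [htr]; linarith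
  exact ⟨hdet, hdetpos, htr, htrneg, fun z hz =>
    quad_root_re_neg _ _ htrneg hdetpos z hz⟩
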